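/- (Hensel's Lemma for functions of class C².) Let E and F be finite-dimensional ℚ_p-vector spaces with ultrametric norms. Let f : B_E(1) → F, df : B_E(1) → 𝓛(E,F) and C > 0 satisfy, for all x, y ∈ B_E(1): ‖f(y) − f(x) − df_x(y−x)‖_F ≤ C·‖y−x‖_E² and ‖df_y − df_x‖_{𝓛(E,F)} ≤ C·‖y−x‖_E. Let v ∈ B_E(1) be such that df_v is invertible and ‖f(v)‖_F·‖df_v^{−1}‖² < C^{−1} ≤ ‖df_v^{−1}‖, where ‖df_v^{−1}‖ = ‖df_v^{−1}‖_{𝓛(F,E)}. Set r = (C·‖df_v^{−1}‖)^{−1}, V = {x : ‖x−v‖_E < r}, and ρ = C·‖f(v)‖_F·‖df_v^{−1}‖². Then the sequence defined by x_0 = v and x_{i+1} = x_i − df_{x_i}^{−1}(f(x_i)) is well defined, stays in V, and converges to some x_∞ ∈ V with f(x_∞) = 0; the rate of convergence satisfies ‖x_i − x_∞‖_E ≤ r·ρ^{2^i} for all i; and x_∞ is the unique solution of f(x) = 0 in V. -/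

import Mathlib

lemma opUlt17 {𝕜 : Type*} [NontriviallyNormedField 𝕜] {E F : Type*}
    [NormedAddCommGroup E] [NormedSpace 𝕜 E] [NormedAddCommGroup F] [NormedSpace 𝕜 F]
    (hF : ∀ x y : F, ‖x + y‖ ≤ max ‖x‖ ‖y‖) (A B : E →L[𝕜] F) :
    ‖A + B‖ ≤ max ‖A‖ ‖B‖ := by
  refine ContinuousLinearMap.opNorm_le_bound _ (le_max_iff.2 (Or.inl (norm_nonneg A))) fun x => ?_
  calc ‖(A + B) x‖ = ‖A x + B x‖ := rfl
  _ ≤ max ‖A x‖ ‖B x‖ := hF _ _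
  _ ≤ max (‖A‖ * ‖x‖) (‖B‖ * ‖x‖) := max_le_max (A.le_opNorm x) (B.le_opNorm x)
  _ = max ‖A‖ ‖B‖ * ‖x‖ := (max_mul_of_nonneg _ _ (norm_nonneg x)).symm

lemma invert17 {p : ℕ} [Fact p.Prime] {E F : Type*}
    [NormedAddCommGroup E] [NormedSpace ℚ_[p] E] [CompleteSpace E]
    [NormedAddCommGroup F] [NormedSpace ℚ_[p] F] [CompleteSpace F]
    (hEult : ∀ x y : E, ‖x + y‖ ≤ max ‖x‖ ‖y‖)
    (A B : E →L[ℚ_[p]] F) (T₀ : F →L[ℚ_[p]] E)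
    (hl : T₀.comp A = ContinuousLinearMap.id ℚ_[p] E)
    (hr : A.comp T₀ = ContinuousLinearMap.id ℚ_[p] F)
    (h : ‖T₀‖ * ‖B - A‖ < 1) :
    ∃ T : F →L[ℚ_[p]] E, T.comp B = ContinuousLinearMap.id ℚ_[p] E ∧
      B.comp T = ContinuousLinearMap.id ℚ_[p] F ∧ ‖T‖ ≤ ‖T₀‖ := by
  set N : E →L[ℚ_[p]] E := T₀.comp (B - A) with hNdef
  have hN : ‖N‖ < 1 := lt_of_le_of_lt (ContinuousLinearMap.opNorm_comp_le _ _) h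
  have hN' : ‖-N‖ < 1 := by rwa [norm_neg]
  set u : (E →L[ℚ_[p]] E)ˣ := Units.oneSub (-N) hN' with hudef
  have huv : (u : E →L[ℚ_[p]] E) = 1 + N := by
    show 1 - (-N) = 1 + N; rw [sub_neg_eq_add]
  have h1 : T₀.comp B = (u : E →L[ℚ_[p]] E) := by
    rw [huv]
    calc T₀.comp B = T₀.comp (A + (B - A)) := by rw [add_sub_cancel]
    _ = T₀.comp A + T₀.comp (B - A) := by rw [ContinuousLinearMap.comp_add]
    _ = 1 + N := by rw [hl]; rfl
  -- the symmetric unit on F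
  set M : F →L[ℚ_[p]] F := (B - A).comp T₀ with hMdef
  have hM : ‖M‖ < 1 := lt_of_le_of_lt (ContinuousLinearMap.opNorm_comp_le _ _)
    (by rwa [mul_comm])
  have hM' : ‖-M‖ < 1 := by rwa [norm_neg]
  set w : (F →L[ℚ_[p]] F)ˣ := Units.oneSub (-M) hM' with hwdef
  have hwv : (w : F →L[ℚ_[p]] F) = 1 + M := by
    show 1 - (-M) = 1 + M; rw [sub_neg_eq_add]
  have h2 : B.comp T₀ = (w : F →L[ℚ_[p]] F) := by
    rw [hwv]
    calc B.comp T₀ = (A + (B - A)).comp T₀ := by rw [add_sub_cancel]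
    _ = A.comp T₀ + (B - A).comp T₀ := by rw [ContinuousLinearMap.add_comp]
    _ = 1 + M := by rw [hr]; rfl
  set T : F →L[ℚ_[p]] E := ((u⁻¹ : (E →L[ℚ_[p]] E)ˣ) : E →L[ℚ_[p]] E).comp T₀ with hTdef
  set R : F →L[ℚ_[p]] E := T₀.comp ((w⁻¹ : (F →L[ℚ_[p]] F)ˣ) : F →L[ℚ_[p]] F) with hRdef
  have hTB : T.comp B = ContinuousLinearMap.id ℚ_[p] E := by
    rw [hTdef, ContinuousLinearMap.comp_assoc, h1]
    show (↑u⁻¹ : E →L[ℚ_[p]] E) * ↑u = _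
    rw [u.inv_mul]; rfl
  have hBR : B.comp R = ContinuousLinearMap.id ℚ_[p] F := by
    rw [hRdef, ← ContinuousLinearMap.comp_assoc, h2]
    show (↑w : F →L[ℚ_[p]] F) * ↑w⁻¹ = _
    rw [w.mul_inv]; rfl
  have hTR : T = R := by
    have h3 := ContinuousLinearMap.comp_assoc T B R
    rw [hTB, hBR, ContinuousLinearMap.id_comp, ContinuousLinearMap.comp_id] at h3
    exact h3.symm
  have hinv : ‖((u⁻¹ : (E →L[ℚ_[p]] E)ˣ) : E →L[ℚ_[p]] E)‖ ≤ 1 := by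
    have he : ((u⁻¹ : (E →L[ℚ_[p]] E)ˣ) : E →L[ℚ_[p]] E)
        = 1 + -(((u⁻¹ : (E →L[ℚ_[p]] E)ˣ) : E →L[ℚ_[p]] E) * N) := by
      have h3 : ((u⁻¹ : (E →L[ℚ_[p]] E)ˣ) : E →L[ℚ_[p]] E) * ↑u = 1 := u.inv_mul
      rw [huv, mul_add, mul_one] at h3
      linear_combination (norm := abel) h3
    have hle : ‖((u⁻¹ : (E →L[ℚ_[p]] E)ˣ) : E →L[ℚ_[p]] E)‖
        ≤ max 1 (‖((u⁻¹ : (E →L[ℚ_[p]] E)ˣ) : E →L[ℚ_[p]] E)‖ * ‖N‖) := by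
      calc ‖((u⁻¹ : (E →L[ℚ_[p]] E)ˣ) : E →L[ℚ_[p]] E)‖
          = ‖(1 : E →L[ℚ_[p]] E) + -(((u⁻¹ : (E →L[ℚ_[p]] E)ˣ) : E →L[ℚ_[p]] E) * N)‖ := by
            rw [← he]
      _ ≤ max ‖(1 : E →L[ℚ_[p]] E)‖ ‖-(((u⁻¹ : (E →L[ℚ_[p]] E)ˣ) : E →L[ℚ_[p]] E) * N)‖ :=
            opUlt17 hEult _ _
      _ ≤ max 1 (‖((u⁻¹ : (E →L[ℚ_[p]] E)ˣ) : E →L[ℚ_[p]] E)‖ * ‖N‖) := by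
            apply max_le_max
            · exact ContinuousLinearMap.norm_id_le
            · rw [norm_neg]; exact norm_mul_le _ _
    rcases le_max_iff.1 hle with h' | h'
    · exact h'
    · nlinarith [norm_nonneg ((u⁻¹ : (E →L[ℚ_[p]] E)ˣ) : E →L[ℚ_[p]] E), hN,
        norm_nonneg N]
  refine ⟨T, hTB, hTR ▸ hBR, ?_⟩
  calc ‖T‖ ≤ ‖((u⁻¹ : (E →L[ℚ_[p]] E)ˣ) : E →L[ℚ_[p]] E)‖ * ‖T₀‖ :=
        ContinuousLinearMap.opNorm_comp_le _ _
  _ ≤ 1 * ‖T₀‖ := by apply mul_le_mul_of_nonneg_right hinv (norm_nonneg _)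
  _ = ‖T₀‖ := one_mul _

set_option maxHeartbeats 1000000

/-- Hensel's Lemma for functions of class `C²`: under the quadratic estimates with
constant `C` and the hypotheses `‖f(v)‖·‖df_v⁻¹‖² < C⁻¹ ≤ ‖df_v⁻¹‖`, the Newton
sequence `x_0 = v`, `x_{i+1} = x_i − df_{x_i}⁻¹(f(x_i))` is well defined, stays in
the ball `V` of centre `v` and radius `r = (C‖df_v⁻¹‖)⁻¹`, converges to the unique
zero `x_∞` of `f` in `V`, with `‖x_i − x_∞‖ ≤ r·ρ^{2^i}` where
`ρ = C·‖f(v)‖·‖df_v⁻¹‖²`. -/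
theorem stmt17 {p : ℕ} [Fact p.Prime]
    {E F : Type*} [NormedAddCommGroup E] [NormedSpace ℚ_[p] E] [FiniteDimensional ℚ_[p] E]
    [NormedAddCommGroup F] [NormedSpace ℚ_[p] F] [FiniteDimensional ℚ_[p] F]
    (hEult : ∀ x y : E, ‖x + y‖ ≤ max ‖x‖ ‖y‖)
    (hFult : ∀ x y : F, ‖x + y‖ ≤ max ‖x‖ ‖y‖)
    (hEhom : ∀ (c : ℚ_[p]) (x : E), ‖c • x‖ = ‖c‖ * ‖x‖)
    (hFhom : ∀ (c : ℚ_[p]) (x : F), ‖c • x‖ = ‖c‖ * ‖x‖)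
    (f : E → F) (df : E → (E →L[ℚ_[p]] F)) (C : ℝ) (hC : 0 < C)
    (hf1 : ∀ x y : E, ‖x‖ ≤ 1 → ‖y‖ ≤ 1 → ‖f y - f x - df x (y - x)‖ ≤ C * ‖y - x‖ ^ 2)
    (hf2 : ∀ x y : E, ‖x‖ ≤ 1 → ‖y‖ ≤ 1 → ‖df y - df x‖ ≤ C * ‖y - x‖)
    (v : E) (hv : ‖v‖ ≤ 1)
    (T₀ : F →L[ℚ_[p]] E)
    (hT₀l : T₀.comp (df v) = ContinuousLinearMap.id ℚ_[p] E)
    (hT₀r : (df v).comp T₀ = ContinuousLinearMap.id ℚ_[p] F)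
    (hmain : ‖f v‖ * ‖T₀‖ ^ 2 < C⁻¹) (hmain' : C⁻¹ ≤ ‖T₀‖) :
    ∃ x : ℕ → E, x 0 = v ∧
      (∀ i, ‖x i - v‖ < (C * ‖T₀‖)⁻¹ ∧
        ∃ T : F →L[ℚ_[p]] E,
          T.comp (df (x i)) = ContinuousLinearMap.id ℚ_[p] E ∧
          (df (x i)).comp T = ContinuousLinearMap.id ℚ_[p] F ∧
          x (i + 1) = x i - T (f (x i))) ∧
      ∃ xlim : E, ‖xlim - v‖ < (C * ‖T₀‖)⁻¹ ∧
        Filter.Tendsto x Filter.atTop (nhds xlim) ∧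
        f xlim = 0 ∧
        (∀ i, ‖x i - xlim‖ ≤ (C * ‖T₀‖)⁻¹ * (C * ‖f v‖ * ‖T₀‖ ^ 2) ^ (2 ^ i)) ∧
        (∀ y : E, ‖y - v‖ < (C * ‖T₀‖)⁻¹ → f y = 0 → y = xlim) := by
  haveI : CompleteSpace E := FiniteDimensional.complete ℚ_[p] E
  haveI : CompleteSpace F := FiniteDimensional.complete ℚ_[p] F
  have ht : (0:ℝ) < ‖T₀‖ := lt_of_lt_of_le (inv_pos.2 hC) hmain'
  set r : ℝ := (C * ‖T₀‖)⁻¹ with hrdef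
  have hr0 : 0 < r := inv_pos.2 (mul_pos hC ht)
  have hCt1 : 1 ≤ C * ‖T₀‖ := by
    rw [← mul_inv_cancel₀ hC.ne']
    exact mul_le_mul_of_nonneg_left hmain' hC.le
  have hr1 : r ≤ 1 := by
    rw [hrdef]; exact inv_le_one_of_one_le₀ hCt1
  set ρ : ℝ := C * ‖f v‖ * ‖T₀‖ ^ 2 with hρdef
  have hρ0 : 0 ≤ ρ := by positivity
  have hρ1 : ρ < 1 := by
    have : C * (‖f v‖ * ‖T₀‖^2) < C * C⁻¹ := mul_lt_mul_of_pos_left hmain hC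
    rw [mul_inv_cancel₀ hC.ne'] at this
    linarith [this]
  have hrρ : r * ρ = ‖T₀‖ * ‖f v‖ := by
    rw [hrdef, hρdef]; field_simp
  have hrρr : r * ρ < r := by nlinarith
  -- ultrametric triangle for differences
  have hsub3 : ∀ a b c : E, ‖a - c‖ ≤ max ‖a - b‖ ‖b - c‖ := by
    intro a b c
    have : a - c = (a - b) + (b - c) := by abel
    rw [this]; exact hEult _ _
  have hball : ∀ x : E, ‖x - v‖ < r → ‖x‖ ≤ 1 := by
    intro x hx
    have : x = (x - v) + v := by abel
    rw [this]
    exact le_trans (hEult _ _) (max_le (le_trans hx.le hr1) hv)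
  -- inverses on the ball
  have key : ∀ x : E, ∃ T : F →L[ℚ_[p]] E, ‖x - v‖ < r →
      (T.comp (df x) = ContinuousLinearMap.id ℚ_[p] E ∧
       (df x).comp T = ContinuousLinearMap.id ℚ_[p] F ∧ ‖T‖ ≤ ‖T₀‖) := by
    intro x
    by_cases hx : ‖x - v‖ < r
    · have hsmall : ‖T₀‖ * ‖df x - df v‖ < 1 := by
        have h2 := hf2 v x hv (hball x hx)
        have : ‖T₀‖ * ‖df x - df v‖ ≤ ‖T₀‖ * (C * ‖x - v‖) :=
          mul_le_mul_of_nonneg_left h2 (norm_nonneg _)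
        have hlt : C * ‖x - v‖ < C * r := mul_lt_mul_of_pos_left hx hC
        have : ‖T₀‖ * ‖df x - df v‖ < ‖T₀‖ * (C * r) := by nlinarith
        have hCr : ‖T₀‖ * (C * r) = 1 := by
          rw [hrdef]; field_simp
        linarith [hCr ▸ this]
      obtain ⟨T, h1, h2, h3⟩ := invert17 hEult (df v) (df x) T₀ hT₀l hT₀r hsmall
      exact ⟨T, fun _ => ⟨h1, h2, h3⟩⟩
    · exact ⟨T₀, fun h => absurd h hx⟩
  choose g hg using key
  -- the Newton sequence
  set X : ℕ → E := fun n => Nat.rec v (fun _ xi => xi - g xi (f xi)) n with hXdef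
  have hX0 : X 0 = v := rfl
  have hXs : ∀ i, X (i + 1) = X i - g (X i) (f (X i)) := fun i => rfl
  -- main invariant
  have main : ∀ i, ‖X i - v‖ ≤ r * ρ ∧ C * ‖T₀‖ ^ 2 * ‖f (X i)‖ ≤ ρ ^ (2 ^ i) := by
    intro i
    induction i with
    | zero =>
      constructor
      · rw [hX0, sub_self, norm_zero]; positivity
      · rw [hX0, pow_zero, pow_one, hρdef]; ring_nf; rfl
    | succ i ih =>
      have hiV : ‖X i - v‖ < r := lt_of_le_of_lt ih.1 hrρr
      obtain ⟨hgl, hgr, hgn⟩ := hg (X i) hiV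
      have hxi1 : ‖X i‖ ≤ 1 := hball _ hiV
      have hfXi : ‖f (X i)‖ ≤ ρ ^ (2 ^ i) / (C * ‖T₀‖ ^ 2) := by
        rw [le_div_iff₀ (by positivity)]
        linarith [ih.2]
      have hstep : ‖X (i + 1) - X i‖ ≤ r * ρ ^ (2 ^ i) := by
        rw [hXs i, sub_sub_cancel_left, norm_neg]
        calc ‖g (X i) (f (X i))‖ ≤ ‖g (X i)‖ * ‖f (X i)‖ :=
              ContinuousLinearMap.le_opNorm _ _
        _ ≤ ‖T₀‖ * (ρ ^ (2 ^ i) / (C * ‖T₀‖ ^ 2)) := by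
              apply mul_le_mul hgn hfXi (norm_nonneg _) (norm_nonneg _)
        _ = r * ρ ^ (2 ^ i) := by rw [hrdef]; field_simp
      have hρpow : ρ ^ (2 ^ i) ≤ ρ := by
        calc ρ ^ (2 ^ i) ≤ ρ ^ 1 :=
              pow_le_pow_of_le_one hρ0 hρ1.le Nat.one_le_two_pow
        _ = ρ := pow_one ρ
      have h1v : ‖X (i + 1) - v‖ ≤ r * ρ := by
        refine le_trans (hsub3 _ (X i) _) (max_le ?_ ih.1)
        calc ‖X (i + 1) - X i‖ ≤ r * ρ ^ (2 ^ i) := hstep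
        _ ≤ r * ρ := mul_le_mul_of_nonneg_left hρpow hr0.le
      refine ⟨h1v, ?_⟩
      have hxi11 : ‖X (i + 1)‖ ≤ 1 := hball _ (lt_of_le_of_lt h1v hrρr)
      have hdfeq : df (X i) (X (i + 1) - X i) = -(f (X i)) := by
        rw [hXs i, sub_sub_cancel_left, map_neg]
        have h4 := congrArg (fun (L : F →L[ℚ_[p]] F) => L (f (X i))) hgr
        simp only [ContinuousLinearMap.comp_apply, ContinuousLinearMap.id_apply] at h4
        rw [h4]
      have hfq := hf1 (X i) (X (i + 1)) hxi1 hxi11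
      rw [hdfeq, sub_neg_eq_add, sub_add_cancel] at hfq
      have hb : ‖f (X (i + 1))‖ ≤ C * (r * ρ ^ (2 ^ i)) ^ 2 := by
        refine le_trans hfq ?_
        apply mul_le_mul_of_nonneg_left _ hC.le
        exact pow_le_pow_left₀ (norm_nonneg _) hstep 2
      calc C * ‖T₀‖ ^ 2 * ‖f (X (i + 1))‖ ≤ C * ‖T₀‖ ^ 2 * (C * (r * ρ ^ (2 ^ i)) ^ 2) := by
            apply mul_le_mul_of_nonneg_left hb (by positivity)
      _ = (ρ ^ (2 ^ i)) ^ 2 := by rw [hrdef]; field_simp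
      _ = ρ ^ (2 ^ (i + 1)) := by rw [← pow_mul, pow_succ]
  have hV : ∀ i, ‖X i - v‖ < r := fun i => lt_of_le_of_lt (main i).1 hrρr
  have hstep' : ∀ i, ‖X (i + 1) - X i‖ ≤ r * ρ ^ (2 ^ i) := by
    intro i
    obtain ⟨hgl, hgr, hgn⟩ := hg (X i) (hV i)
    have hfXi : ‖f (X i)‖ ≤ ρ ^ (2 ^ i) / (C * ‖T₀‖ ^ 2) := by
      rw [le_div_iff₀ (by positivity)]
      linarith [(main i).2]
    rw [hXs i, sub_sub_cancel_left, norm_neg]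
    calc ‖g (X i) (f (X i))‖ ≤ ‖g (X i)‖ * ‖f (X i)‖ := ContinuousLinearMap.le_opNorm _ _
    _ ≤ ‖T₀‖ * (ρ ^ (2 ^ i) / (C * ‖T₀‖ ^ 2)) :=
          mul_le_mul hgn hfXi (norm_nonneg _) (norm_nonneg _)
    _ = r * ρ ^ (2 ^ i) := by rw [hrdef]; field_simp
  have hD : ∀ i j, i ≤ j → ‖X j - X i‖ ≤ r * ρ ^ (2 ^ i) := by
    intro i j hij
    induction j, hij using Nat.le_induction with
    | base => rw [sub_self, norm_zero]; positivity
    | succ j hij ihj =>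
      refine le_trans (hsub3 _ (X j) _) (max_le ?_ ihj)
      calc ‖X (j + 1) - X j‖ ≤ r * ρ ^ (2 ^ j) := hstep' j
      _ ≤ r * ρ ^ (2 ^ i) := by
            apply mul_le_mul_of_nonneg_left _ hr0.le
            exact pow_le_pow_of_le_one hρ0 hρ1.le (Nat.pow_le_pow_right (by norm_num) hij)
  -- Cauchy and limit
  have hbndlim : Filter.Tendsto (fun i => r * ρ ^ (2 ^ i)) Filter.atTop (nhds 0) := by
    have h1 : Filter.Tendsto (fun i : ℕ => r * ρ ^ i) Filter.atTop (nhds 0) := by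
      have := (tendsto_pow_atTop_nhds_zero_of_lt_one hρ0 hρ1).const_mul r
      simpa using this
    apply squeeze_zero (fun i => by positivity) _ h1
    intro i
    apply mul_le_mul_of_nonneg_left _ hr0.le
    exact pow_le_pow_of_le_one hρ0 hρ1.le (Nat.lt_two_pow_self (n := i)).le
  have hcauchy : CauchySeq X := by
    apply cauchySeq_of_le_tendsto_0 (fun N => r * ρ ^ (2 ^ N)) _ hbndlim
    intro n m N hn hm
    rw [dist_eq_norm]
    refine le_trans (hsub3 (X n) (X N) (X m)) (max_le (hD N n hn) ?_)
    rw [norm_sub_rev]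
    exact hD N m hm
  obtain ⟨xlim, hxlim⟩ := cauchySeq_tendsto_of_complete hcauchy
  have hrate : ∀ i, ‖X i - xlim‖ ≤ r * ρ ^ (2 ^ i) := by
    intro i
    have htend : Filter.Tendsto (fun j => ‖X i - X j‖) Filter.atTop (nhds ‖X i - xlim‖) :=
      ((hxlim.const_sub (X i)).norm)
    refine le_of_tendsto htend ?_
    filter_upwards [Filter.eventually_ge_atTop i] with j hj
    rw [norm_sub_rev]
    exact hD i j hj
  have hlimv : ‖xlim - v‖ ≤ r * ρ := by
    have htend : Filter.Tendsto (fun j => ‖X j - v‖) Filter.atTop (nhds ‖xlim - v‖) :=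
      ((hxlim.sub_const v).norm)
    exact le_of_tendsto htend (Filter.Eventually.of_forall fun j => (main j).1)
  have hlimvlt : ‖xlim - v‖ < r := lt_of_le_of_lt hlimv hrρr
  have hxlim1 : ‖xlim‖ ≤ 1 := hball _ hlimvlt
  -- f xlim = 0
  have hfzero : f xlim = 0 := by
    set MM : ℝ := ‖df v‖ + C * r with hMMdef
    set K : ℝ := C * r ^ 2 + MM * r + (C * ‖T₀‖ ^ 2)⁻¹ with hKdef
    have hbnd : ∀ i, ‖f xlim‖ ≤ K * ρ ^ i := by
      intro i
      have hdfb : ‖df (X i)‖ ≤ MM := by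
        have h5 : df (X i) = df v + (df (X i) - df v) := by abel
        rw [h5]
        refine le_trans (norm_add_le _ _) ?_
        rw [hMMdef]
        have := hf2 v (X i) hv (hball _ (hV i))
        have h6 : C * ‖X i - v‖ ≤ C * r := mul_le_mul_of_nonneg_left (hV i).le hC.le
        linarith
      have hq := hf1 (X i) xlim (hball _ (hV i)) hxlim1
      have hd : ‖xlim - X i‖ ≤ r * ρ ^ i := by
        rw [norm_sub_rev]
        refine le_trans (hrate i) ?_
        apply mul_le_mul_of_nonneg_left _ hr0.le
        exact pow_le_pow_of_le_one hρ0 hρ1.le (Nat.lt_two_pow_self (n := i)).le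
      have hρi1 : ρ ^ i ≤ 1 := pow_le_one₀ hρ0 hρ1.le
      have hρi0 : (0:ℝ) ≤ ρ ^ i := pow_nonneg hρ0 i
      have hMM0 : (0:ℝ) ≤ MM := by rw [hMMdef]; positivity
      have hfXi : ‖f (X i)‖ ≤ ρ ^ i * (C * ‖T₀‖ ^ 2)⁻¹ := by
        have h7 : ρ ^ (2 ^ i) ≤ ρ ^ i := pow_le_pow_of_le_one hρ0 hρ1.le (Nat.lt_two_pow_self (n := i)).le
        have h9 : C * ‖T₀‖ ^ 2 * ‖f (X i)‖ ≤ ρ ^ i := le_trans (main i).2 h7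
        calc ‖f (X i)‖ = (C * ‖T₀‖ ^ 2 * ‖f (X i)‖) * (C * ‖T₀‖ ^ 2)⁻¹ := by
              field_simp
        _ ≤ ρ ^ i * (C * ‖T₀‖ ^ 2)⁻¹ := mul_le_mul_of_nonneg_right h9 (by positivity)
      have hB : ‖df (X i) (xlim - X i)‖ ≤ MM * (r * ρ ^ i) := by
        refine le_trans (ContinuousLinearMap.le_opNorm _ _) ?_
        exact mul_le_mul hdfb hd (norm_nonneg _) hMM0
      calc ‖f xlim‖
          = ‖(f xlim - f (X i) - df (X i) (xlim - X i)) + df (X i) (xlim - X i) + f (X i)‖ := by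
            congr 1; abel
      _ ≤ ‖f xlim - f (X i) - df (X i) (xlim - X i)‖ + ‖df (X i) (xlim - X i)‖ + ‖f (X i)‖ :=
            norm_add₃_le
      _ ≤ C * ‖xlim - X i‖ ^ 2 + MM * (r * ρ ^ i) + ρ ^ i * (C * ‖T₀‖ ^ 2)⁻¹ :=
            add_le_add (add_le_add hq hB) hfXi
      _ ≤ K * ρ ^ i := by
            rw [hKdef]
            nlinarith [hd, hρi0, hρi1, hr0.le, hC.le, norm_nonneg (xlim - X i),
              mul_le_mul hd hd (norm_nonneg _) (mul_nonneg hr0.le hρi0),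
              mul_nonneg (mul_nonneg hC.le (mul_nonneg hr0.le hr0.le)) hρi0]
    have htendK : Filter.Tendsto (fun i : ℕ => K * ρ ^ i) Filter.atTop (nhds 0) := by
      have := (tendsto_pow_atTop_nhds_zero_of_lt_one hρ0 hρ1).const_mul K
      simpa using this
    have : ‖f xlim‖ ≤ 0 := ge_of_tendsto' htendK hbnd
    simpa using le_antisymm this (norm_nonneg _)
  -- assemble
  refine ⟨X, hX0, fun i => ⟨hV i, g (X i), (hg (X i) (hV i)).1, (hg (X i) (hV i)).2.1, hXs i⟩,
    xlim, hlimvlt, hxlim, hfzero, hrate, ?_⟩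
  intro y hyV hfy
  obtain ⟨hgl, hgr, hgn⟩ := hg xlim hlimvlt
  have h1 : ‖df xlim (y - xlim)‖ ≤ C * ‖y - xlim‖ ^ 2 := by
    have h0 := hf1 xlim y hxlim1 (hball y hyV)
    rw [hfy, hfzero] at h0
    rw [sub_zero, zero_sub, norm_neg] at h0
    exact h0
  have h2 : y - xlim = g xlim (df xlim (y - xlim)) := by
    have h4 := congrArg (fun (L : E →L[ℚ_[p]] E) => L (y - xlim)) hgl
    simp only [ContinuousLinearMap.comp_apply, ContinuousLinearMap.id_apply] at h4
    exact h4.symm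
  have h3 : ‖y - xlim‖ ≤ ‖T₀‖ * (C * ‖y - xlim‖ ^ 2) := by
    calc ‖y - xlim‖ = ‖g xlim (df xlim (y - xlim))‖ := by rw [← h2]
    _ ≤ ‖g xlim‖ * ‖df xlim (y - xlim)‖ := ContinuousLinearMap.le_opNorm _ _
    _ ≤ ‖T₀‖ * (C * ‖y - xlim‖ ^ 2) :=
          mul_le_mul hgn h1 (norm_nonneg _) (norm_nonneg _)
  have h4 : ‖y - xlim‖ < r := by
    refine lt_of_le_of_lt (hsub3 y v xlim) (max_lt hyV ?_)
    rw [norm_sub_rev]; exact hlimvlt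
  have h5 : ‖y - xlim‖ = 0 := by
    rcases eq_or_lt_of_le (norm_nonneg (y - xlim)) with h | h
    · exact h.symm
    · exfalso
      have h6 : C * ‖T₀‖ * ‖y - xlim‖ < 1 := by
        rw [hrdef] at h4
        calc C * ‖T₀‖ * ‖y - xlim‖ < C * ‖T₀‖ * (C * ‖T₀‖)⁻¹ := by
              apply mul_lt_mul_of_pos_left h4 (by positivity)
        _ = 1 := mul_inv_cancel₀ (by positivity)
      nlinarith
  exact sub_eq_zero.mp (norm_eq_zero.mp h5)
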